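/- Fix a real constant q, a real number ν > 0, a vector n ∈ ℝ^m, and finitely many vectors a_1, …, a_K ∈ ℝ^m with real offsets b_1, …, b_K. Then the function g(x) = q - ln(1 - ν·e^{-n·x}) + ln( Σ_{k=1}^{K} e^{a_k·x + b_k} ) is convex on the convex set S = { x ∈ ℝ^m | ν·e^{-n·x} < 1 }. -/

import Mathlib

open Real Set Finset

private lemma phi_convexOn :
    ConvexOn ℝ (Set.Iio (0:ℝ)) (fun s => -Real.log (1 - Real.exp s)) := by
  set f : ℝ → ℝ := fun s => -Real.log (1 - Real.exp s) with hf
  set ψ : ℝ → ℝ := fun s => Real.exp s / (1 - Real.exp s) with hψ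
  have hpos : ∀ s ∈ Set.Iio (0:ℝ), (0:ℝ) < 1 - Real.exp s := by
    intro s hs
    have : Real.exp s < 1 := by rwa [Real.exp_lt_one_iff]
    linarith
  have hderiv : ∀ s ∈ Set.Iio (0:ℝ), HasDerivAt f (ψ s) s := by
    intro s hs
    have h1 := hpos s hs
    have hg : HasDerivAt (fun s => 1 - Real.exp s) (-Real.exp s) s :=
      (Real.hasDerivAt_exp s).const_sub 1
    have hl : HasDerivAt (fun s => Real.log (1 - Real.exp s))
        (-Real.exp s / (1 - Real.exp s)) s := hg.log h1.ne'
    have h := hl.neg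
    rw [neg_div, neg_neg] at h
    exact h
  have hev : ∀ s ∈ Set.Iio (0:ℝ), deriv f =ᶠ[nhds s] ψ := by
    intro s hs
    filter_upwards [Iio_mem_nhds hs] with t ht
    exact (hderiv t ht).deriv
  have hψderiv : ∀ s ∈ Set.Iio (0:ℝ),
      HasDerivAt ψ ((Real.exp s * (1 - Real.exp s) - Real.exp s * (-Real.exp s))
        / (1 - Real.exp s)^2) s := by
    intro s hs
    exact (Real.hasDerivAt_exp s).div ((Real.hasDerivAt_exp s).const_sub 1) (hpos s hs).ne'
  apply convexOn_of_deriv2_nonneg (convex_Iio 0)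
  · apply ContinuousOn.neg
    apply ContinuousOn.log
    · exact (continuousOn_const.sub Real.continuous_exp.continuousOn)
    · intro s hs; exact (hpos s hs).ne'
  · rw [interior_Iio]
    intro s hs
    exact ((hderiv s hs).differentiableAt).differentiableWithinAt
  · rw [interior_Iio]
    intro s hs
    have : DifferentiableAt ℝ ψ s := (hψderiv s hs).differentiableAt
    exact ((hev s hs).differentiableAt_iff.mpr this).differentiableWithinAt
  · rw [interior_Iio]
    intro s hs
    have h2 : deriv (deriv f) s = deriv ψ s := (hev s hs).deriv_eq
    have h3 : deriv ψ s = (Real.exp s * (1 - Real.exp s) - Real.exp s * (-Real.exp s))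
        / (1 - Real.exp s)^2 := (hψderiv s hs).deriv
    have h4 : (Real.exp s * (1 - Real.exp s) - Real.exp s * (-Real.exp s))
        / (1 - Real.exp s)^2 = Real.exp s / (1 - Real.exp s)^2 := by ring
    simp only [Function.iterate_succ, Function.iterate_zero, Function.comp_apply, Function.id_def]
    rw [h2, h3, h4]
    positivity

private lemma lse_ineq (K : ℕ) (u v : Fin K → ℝ) (α β : ℝ)
    (hα : 0 ≤ α) (hβ : 0 ≤ β) (hab : α + β = 1) :
    Real.log (∑ k, Real.exp (α * u k + β * v k)) ≤
      α * Real.log (∑ k, Real.exp (u k)) + β * Real.log (∑ k, Real.exp (v k)) := by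
  rcases Nat.eq_zero_or_pos K with hK | hK
  · subst hK; simp
  rcases hα.eq_or_lt with hα0 | hα0
  · have hβ1 : β = 1 := by linarith
    simp [← hα0, hβ1]
  rcases hβ.eq_or_lt with hβ0 | hβ0
  · have hα1 : α = 1 := by linarith
    simp [← hβ0, hα1]
  have hα1 : α < 1 := by linarith
  have hconj : Real.HolderConjugate α⁻¹ β⁻¹ :=
    ⟨by rw [inv_inv, inv_inv, inv_one]; exact hab, inv_pos.mpr hα0, inv_pos.mpr hβ0⟩
  have hH := Real.inner_le_Lp_mul_Lq_of_nonneg (s := (Finset.univ : Finset (Fin K)))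
    (f := fun k => Real.exp (α * u k)) (g := fun k => Real.exp (β * v k)) hconj
    (fun k _ => (Real.exp_pos _).le) (fun k _ => (Real.exp_pos _).le)
  have hfp : ∀ k : Fin K, Real.exp (α * u k) ^ α⁻¹ = Real.exp (u k) := by
    intro k
    rw [← Real.exp_mul, mul_comm α, mul_assoc, mul_inv_cancel₀ hα0.ne', mul_one]
  have hgq : ∀ k : Fin K, Real.exp (β * v k) ^ β⁻¹ = Real.exp (v k) := by
    intro k
    rw [← Real.exp_mul, mul_comm β, mul_assoc, mul_inv_cancel₀ hβ0.ne', mul_one]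
  simp only [hfp, hgq, ← Real.exp_add] at hH
  haveI : Nonempty (Fin K) := Fin.pos_iff_nonempty.mp hK
  have hupos : (0:ℝ) < ∑ k, Real.exp (u k) :=
    Finset.sum_pos (fun k _ => Real.exp_pos _) Finset.univ_nonempty
  have hvpos : (0:ℝ) < ∑ k, Real.exp (v k) :=
    Finset.sum_pos (fun k _ => Real.exp_pos _) Finset.univ_nonempty
  have hlog := Real.log_le_log
    (Finset.sum_pos (fun k _ => Real.exp_pos _) Finset.univ_nonempty) hH
  calc Real.log (∑ k, Real.exp (α * u k + β * v k)) ≤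
      Real.log ((∑ k, Real.exp (u k)) ^ (1/α⁻¹) * (∑ k, Real.exp (v k)) ^ (1/β⁻¹)) := by
        simpa using hlog
    _ = α * Real.log (∑ k, Real.exp (u k)) + β * Real.log (∑ k, Real.exp (v k)) := by
        rw [one_div, one_div, inv_inv, inv_inv,
          Real.log_mul (Real.rpow_pos_of_pos hupos _).ne' (Real.rpow_pos_of_pos hvpos _).ne',
          Real.log_rpow hupos, Real.log_rpow hvpos]

/-- The logarithm of the enzyme cost of one reaction,
`g(x) = q - ln(1 - ν·e^(-n·x)) + ln (∑ k, e^(a k · x + b k))`,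
is convex on the convex set `S = {x | ν·e^(-n·x) < 1}`. -/
theorem log_enzyme_cost_convexOn (m K : ℕ) (q : ℝ) (ν : ℝ) (hν : 0 < ν)
    (n : Fin m → ℝ) (a : Fin K → Fin m → ℝ) (b : Fin K → ℝ) :
    ConvexOn ℝ {x : Fin m → ℝ | ν * Real.exp (-(∑ i, n i * x i)) < 1}
      (fun x : Fin m → ℝ =>
        q - Real.log (1 - ν * Real.exp (-(∑ i, n i * x i)))
          + Real.log (∑ k : Fin K, Real.exp (∑ i, a k i * x i + b k))) := by
  set S : Set (Fin m → ℝ) := {x : Fin m → ℝ | ν * Real.exp (-(∑ i, n i * x i)) < 1} with hSdef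
  -- rewrite ν·e^{-t} = e^{log ν - t}
  have hrw : ∀ x : Fin m → ℝ, ν * Real.exp (-(∑ i, n i * x i)) =
      Real.exp (Real.log ν - ∑ i, n i * x i) := by
    intro x
    rw [sub_eq_add_neg, Real.exp_add, Real.exp_log hν]
  have hmem : ∀ x : Fin m → ℝ, x ∈ S ↔ Real.log ν - ∑ i, n i * x i < 0 := by
    intro x
    rw [hSdef, Set.mem_setOf_eq, hrw x, Real.exp_lt_one_iff]
  -- linearity of the inner sums
  have hlin : ∀ (c : Fin m → ℝ) (x y : Fin m → ℝ) (α β : ℝ),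
      (∑ i, c i * (α • x + β • y) i) = α * (∑ i, c i * x i) + β * (∑ i, c i * y i) := by
    intro c x y α β
    rw [Finset.mul_sum, Finset.mul_sum, ← Finset.sum_add_distrib]
    exact Finset.sum_congr rfl fun i _ => by
      simp [Pi.add_apply, Pi.smul_apply, smul_eq_mul]; ring
  have hS : Convex ℝ S := by
    intro x hx y hy α β hα hβ hab
    rw [hmem] at hx hy ⊢
    rw [hlin n x y α β]
    rcases hα.eq_or_lt with h0 | h0
    · have : β = 1 := by linarith
      subst this; rw [← h0]; linarith
    · have he : Real.log ν - (α * (∑ i, n i * x i) + β * (∑ i, n i * y i)) =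
          α * (Real.log ν - ∑ i, n i * x i) + β * (Real.log ν - ∑ i, n i * y i) := by
        linear_combination (-Real.log ν) * hab
      rw [he]
      have h1 := mul_pos h0 (neg_pos.mpr hx)
      have h2 := mul_nonneg hβ (neg_nonneg.mpr hy.le)
      nlinarith [h1, h2]
  have h1 : ConvexOn ℝ S (fun x : Fin m → ℝ =>
      q - Real.log (1 - ν * Real.exp (-(∑ i, n i * x i)))) := by
    refine ⟨hS, ?_⟩
    intro x hx y hy α β hα hβ hab
    rw [hmem] at hx hy
    have hmemz : Real.log ν - ∑ i, n i * (α • x + β • y) i =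
        α * (Real.log ν - ∑ i, n i * x i) + β * (Real.log ν - ∑ i, n i * y i) := by
      rw [hlin n x y α β]; linear_combination (-Real.log ν) * hab
    have hphi := phi_convexOn.2 hx hy hα hβ hab
    simp only [smul_eq_mul] at hphi

    simp only [hrw, hmemz, smul_eq_mul]
    calc q - Real.log (1 - Real.exp (α * (Real.log ν - ∑ i, n i * x i)
          + β * (Real.log ν - ∑ i, n i * y i)))
        ≤ q + (α * -Real.log (1 - Real.exp (Real.log ν - ∑ i, n i * x i))
          + β * -Real.log (1 - Real.exp (Real.log ν - ∑ i, n i * y i))) := by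
          rw [sub_eq_add_neg]
          have := hphi
          linarith [hphi]
      _ = α * (q - Real.log (1 - Real.exp (Real.log ν - ∑ i, n i * x i)))
          + β * (q - Real.log (1 - Real.exp (Real.log ν - ∑ i, n i * y i))) := by
          linear_combination (-q) * hab
  have h2 : ConvexOn ℝ S (fun x : Fin m → ℝ =>
      Real.log (∑ k : Fin K, Real.exp (∑ i, a k i * x i + b k))) := by
    refine ⟨hS, ?_⟩
    intro x hx y hy α β hα hβ hab
    have harg : ∀ k : Fin K, (∑ i, a k i * (α • x + β • y) i + b k) =
        α * (∑ i, a k i * x i + b k) + β * (∑ i, a k i * y i + b k) := by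
      intro k
      rw [hlin (a k) x y α β]; linear_combination (-(b k)) * hab
    simp only [harg, smul_eq_mul]
    exact lse_ineq K _ _ α β hα hβ hab
  exact h1.add h2
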